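/- arXiv:2212.12260 — 7 statements merged into one kernel-verified Lean document; each statement's English description precedes it below -/
import Mathlib

section
/- Let M be a weight sequence and let ρ, R ≥ 1 be real numbers. Then for all j, k, l ∈ ℕ: ρ^j · M_{k+l} · R^l ≤ ρ^{j+l} · M_k + M_{j+k+l} · R^{j+l}. -/
theorem weight_sequence_aux_inequality (M : ℕ → ℝ)
    (hpos : ∀ k, 0 < M k) (hM0 : M 0 = 1) (hM1 : 1 ≤ M 1)
    (hmono : Monotone fun k => M (k + 1) / M k)
    (hlim : Filter.Tendsto (fun k => M (k + 1) / M k) Filter.atTop Filter.atTop)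
    (ρ R : ℝ) (hρ : 1 ≤ ρ) (hR : 1 ≤ R) :
    ∀ j k l : ℕ,
      ρ ^ j * M (k + l) * R ^ l ≤ ρ ^ (j + l) * M k + M (j + k + l) * R ^ (j + l) := by
  set f : ℕ → ℝ := fun k => M (k + 1) / M k with hf
  have hfpos : ∀ n, 0 < f n := fun n => div_pos (hpos _) (hpos _)
  have hstep : ∀ n, M (n + 1) = f n * M n := by
    intro n
    rw [hf]
    rw [div_mul_cancel₀ _ (hpos n).ne']
  -- lower bound
  have hlow : ∀ m j : ℕ, M m * (f m) ^ j ≤ M (m + j) := by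
    intro m j
    induction j with
    | zero => simp
    | succ j ih =>
      have h1 : f m ≤ f (m + j) := hmono (Nat.le_add_right m j)
      calc M m * f m ^ (j + 1) = (M m * f m ^ j) * f m := by ring
        _ ≤ M (m + j) * f m := by
            exact mul_le_mul_of_nonneg_right ih (hfpos m).le
        _ ≤ M (m + j) * f (m + j) := by
            exact mul_le_mul_of_nonneg_left h1 (hpos _).le
        _ = M (m + j + 1) := by rw [hstep (m + j)]; ring
  -- upper bound
  have hup : ∀ k l : ℕ, M (k + l) ≤ M k * (f (k + l)) ^ l := by
    intro k l
    induction l with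
    | zero => simp
    | succ l ih =>
      have h1 : f (k + l) ≤ f (k + l + 1) := hmono (Nat.le_succ _)
      calc M (k + (l + 1)) = f (k + l) * M (k + l) := by
            rw [show k + (l + 1) = (k + l) + 1 by ring, hstep (k + l)]
        _ ≤ f (k + l) * (M k * f (k + l) ^ l) :=
            mul_le_mul_of_nonneg_left ih (hfpos _).le
        _ = M k * f (k + l) ^ (l + 1) := by ring
        _ ≤ M k * f (k + l + 1) ^ (l + 1) := by
            refine mul_le_mul_of_nonneg_left ?_ (hpos _).le
            exact pow_le_pow_left₀ (hfpos _).le h1 _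
        _ = M k * f (k + (l + 1)) ^ (l + 1) := by ring_nf
  intro j k l
  have hRpos : (0:ℝ) < R := lt_of_lt_of_le one_pos hR
  have hρpos : (0:ℝ) < ρ := lt_of_lt_of_le one_pos hρ
  by_cases hcase : ρ ^ j * M (k + l) ≤ M (j + k + l) * R ^ j
  · -- first case
    have h1 : ρ ^ j * M (k + l) * R ^ l ≤ M (j + k + l) * R ^ j * R ^ l :=
      mul_le_mul_of_nonneg_right hcase (pow_nonneg hRpos.le l)
    have h2 : M (j + k + l) * R ^ j * R ^ l = M (j + k + l) * R ^ (j + l) := by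
      rw [pow_add]; ring
    have h3 : 0 < ρ ^ (j + l) * M k :=
      mul_pos (pow_pos hρpos _) (hpos k)
    linarith
  · push_neg at hcase
    -- M(j+k+l) = M((k+l)+j) ≥ M(k+l) * f(k+l)^j
    have hidx : j + k + l = (k + l) + j := by omega
    have hlow' : M (k + l) * f (k + l) ^ j ≤ M (j + k + l) := by
      rw [hidx]; exact hlow (k + l) j
    have hprod : M (k + l) * f (k + l) ^ j * R ^ j < ρ ^ j * M (k + l) := by
      calc M (k + l) * f (k + l) ^ j * R ^ j
          ≤ M (j + k + l) * R ^ j :=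
            mul_le_mul_of_nonneg_right hlow' (pow_nonneg hRpos.le j)
        _ < ρ ^ j * M (k + l) := hcase
    have hfR : (f (k + l) * R) ^ j < ρ ^ j := by
      have hM : 0 < M (k + l) := hpos _
      rw [mul_pow]
      nlinarith [pow_pos (hfpos (k + l)) j, pow_pos hRpos j]
    have hj : j ≠ 0 := by
      rintro rfl
      simp at hfR
    have hbase : f (k + l) * R < ρ := by
      refine lt_of_pow_lt_pow_left₀ j hρpos.le hfR
    -- now conclude
    have hupR : M (k + l) * R ^ l ≤ M k * ρ ^ l := by
      calc M (k + l) * R ^ l ≤ M k * f (k + l) ^ l * R ^ l :=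
            mul_le_mul_of_nonneg_right (hup k l) (pow_nonneg hRpos.le l)
        _ = M k * (f (k + l) * R) ^ l := by rw [mul_pow]; ring
        _ ≤ M k * ρ ^ l := by
            refine mul_le_mul_of_nonneg_left ?_ (hpos k).le
            exact pow_le_pow_left₀ (mul_nonneg (hfpos _).le hRpos.le) hbase.le _
    have h1 : ρ ^ j * M (k + l) * R ^ l ≤ ρ ^ j * (M k * ρ ^ l) := by
      have := mul_le_mul_of_nonneg_left hupR (pow_nonneg hρpos.le j)
      linarith [this]
    have h2 : ρ ^ j * (M k * ρ ^ l) = ρ ^ (j + l) * M k := by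
      rw [pow_add]; ring
    have h3 : 0 < M (j + k + l) * R ^ (j + l) :=
      mul_pos (hpos _) (pow_pos hRpos _)
    linarith
end

section
/- Let T and U be weight sequences and τ > 1. If there is a constant C ≥ 1 such that ω_T(s) ≤ τ^{-1} ω_U(s^τ) + C for all s ≥ 0, then U_k ≤ e^{Cτ} (T_k)^τ for all k ∈ ℕ. -/
noncomputable def assocOmega (M : ℕ → ℝ) (t : ℝ) : ℝ :=
  if t = 0 then 0 else ⨆ k : ℕ, Real.log (t ^ k / M k)

private lemma bddAbove_log_range (M : ℕ → ℝ) (hpos : ∀ k, 0 < M k)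
    (hlim : Filter.Tendsto (fun k => M (k + 1) / M k) Filter.atTop Filter.atTop)
    (s : ℝ) (hs : 0 < s) :
    BddAbove (Set.range fun j : ℕ => Real.log (s ^ j / M j)) := by
  obtain ⟨N, hN⟩ := Filter.eventually_atTop.1 (hlim.eventually_ge_atTop s)
  have key : ∀ j, N ≤ j → s ^ j / M j ≤ s ^ N / M N := by
    intro j hj
    induction j, hj using Nat.le_induction with
    | base => exact le_refl _
    | succ j hj ih =>
      refine le_trans ?_ ih
      rw [div_le_div_iff₀ (hpos _) (hpos _)]
      have h1 : s * M j ≤ M (j + 1) := (le_div_iff₀ (hpos j)).1 (hN j hj)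
      calc s ^ (j + 1) * M j = s ^ j * (s * M j) := by ring
        _ ≤ s ^ j * M (j + 1) := mul_le_mul_of_nonneg_left h1 (by positivity)
  refine ⟨(Finset.range (N + 1)).sup' ⟨0, by simp⟩ fun j => Real.log (s ^ j / M j), ?_⟩
  rintro x ⟨j, rfl⟩
  rcases le_or_gt j N with hj | hj
  · exact Finset.le_sup' (fun j => Real.log (s ^ j / M j))
      (Finset.mem_range.2 (by omega))
  · refine le_trans (Real.log_le_log (div_pos (pow_pos hs j) (hpos j)) (key j hj.le)) ?_
    exact Finset.le_sup' (fun j => Real.log (s ^ j / M j))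
      (Finset.mem_range.2 (by omega))

theorem power_bound_of_omega_bound (T U : ℕ → ℝ)
    (hTpos : ∀ k, 0 < T k) (hT0 : T 0 = 1) (hT1 : 1 ≤ T 1)
    (hTmono : Monotone fun k => T (k + 1) / T k)
    (hTlim : Filter.Tendsto (fun k => T (k + 1) / T k) Filter.atTop Filter.atTop)
    (hUpos : ∀ k, 0 < U k) (hU0 : U 0 = 1) (hU1 : 1 ≤ U 1)
    (hUmono : Monotone fun k => U (k + 1) / U k)
    (hUlim : Filter.Tendsto (fun k => U (k + 1) / U k) Filter.atTop Filter.atTop)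
    (τ : ℝ) (hτ : 1 < τ) (C : ℝ) (hC : 1 ≤ C)
    (h : ∀ s : ℝ, 0 ≤ s → assocOmega T s ≤ τ⁻¹ * assocOmega U (s ^ τ) + C) :
    ∀ k : ℕ, U k ≤ Real.exp (C * τ) * T k ^ τ := by
  have hτ0 : (0 : ℝ) < τ := lt_trans one_pos hτ
  intro k
  match k with
  | 0 =>
    have h1 : (1 : ℝ) ≤ Real.exp (C * τ) :=
      Real.one_le_exp (by nlinarith)
    rw [hU0, hT0, Real.one_rpow]
    linarith
  | n + 1 =>
    set t := U (n + 1) / U n with ht_def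
    have ht : 0 < t := div_pos (hUpos _) (hUpos _)
    have step_up : ∀ j, j ≤ n → t ^ j / U j ≤ t ^ (j + 1) / U (j + 1) := by
      intro j hj
      rw [div_le_div_iff₀ (hUpos j) (hUpos (j + 1))]
      have hm : U (j + 1) / U j ≤ t := hUmono hj
      have h1 : U (j + 1) ≤ t * U j := (div_le_iff₀ (hUpos j)).1 hm
      calc t ^ j * U (j + 1) ≤ t ^ j * (t * U j) :=
            mul_le_mul_of_nonneg_left h1 (by positivity)
        _ = t ^ (j + 1) * U j := by ring
    have step_down : ∀ j, n ≤ j → t ^ (j + 1) / U (j + 1) ≤ t ^ j / U j := by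
      intro j hj
      rw [div_le_div_iff₀ (hUpos (j + 1)) (hUpos j)]
      have hm : t ≤ U (j + 1) / U j := hUmono hj
      have h1 : t * U j ≤ U (j + 1) := (le_div_iff₀ (hUpos j)).1 hm
      calc t ^ (j + 1) * U j = t ^ j * (t * U j) := by ring
        _ ≤ t ^ j * U (j + 1) := mul_le_mul_of_nonneg_left h1 (by positivity)
    have hmax : ∀ j, t ^ j / U j ≤ t ^ (n + 1) / U (n + 1) := by
      intro j
      rcases le_or_gt j (n + 1) with hj | hj
      · have mono : Monotone fun m => t ^ min m (n + 1) / U (min m (n + 1)) := by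
          apply monotone_nat_of_le_succ
          intro m
          rcases le_or_gt (m + 1) (n + 1) with hm | hm
          · rw [min_eq_left (by omega : m ≤ n + 1), min_eq_left hm]
            exact step_up m (by omega)
          · rw [min_eq_right (by omega : n + 1 ≤ m),
              min_eq_right (by omega : n + 1 ≤ m + 1)]
        have := mono hj
        simpa [min_eq_left hj] using this
      · have anti : Antitone fun m => t ^ max m (n + 1) / U (max m (n + 1)) := by
          apply antitone_nat_of_succ_le
          intro m
          rcases le_or_gt (n + 1) m with hm | hm
          · rw [max_eq_left (by omega : n + 1 ≤ m + 1), max_eq_left hm]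
            exact step_down m (by omega)
          · rw [max_eq_right (by omega : m ≤ n + 1),
              max_eq_right (by omega : m + 1 ≤ n + 1)]
        have := anti hj.le
        simpa [max_eq_left hj.le] using this
    have hbddU : BddAbove (Set.range fun j : ℕ => Real.log (t ^ j / U j)) := by
      refine ⟨Real.log (t ^ (n + 1) / U (n + 1)), ?_⟩
      rintro x ⟨j, rfl⟩
      exact Real.log_le_log (div_pos (pow_pos ht j) (hUpos j)) (hmax j)
    have hωU : assocOmega U t = Real.log (t ^ (n + 1) / U (n + 1)) := by
      rw [assocOmega, if_neg ht.ne']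
      apply le_antisymm
      · exact ciSup_le fun j =>
          Real.log_le_log (div_pos (pow_pos ht j) (hUpos j)) (hmax j)
      · exact le_ciSup hbddU (n + 1)
    set s := t ^ (τ⁻¹ : ℝ) with hs_def
    have hs : 0 < s := Real.rpow_pos_of_pos ht _
    have hst : s ^ τ = t := by
      rw [hs_def, ← Real.rpow_mul ht.le, inv_mul_cancel₀ hτ0.ne', Real.rpow_one]
    have hT := h s hs.le
    rw [hst, hωU] at hT
    have hTk : Real.log (s ^ (n + 1) / T (n + 1)) ≤ assocOmega T s := by
      rw [assocOmega, if_neg hs.ne']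
      exact le_ciSup (bddAbove_log_range T hTpos hTlim s hs) (n + 1)
    have hlogs : Real.log s = τ⁻¹ * Real.log t := Real.log_rpow ht τ⁻¹
    have e1 : Real.log (s ^ (n + 1) / T (n + 1))
        = (n + 1 : ℕ) * (τ⁻¹ * Real.log t) - Real.log (T (n + 1)) := by
      rw [Real.log_div (by positivity) (hTpos _).ne', Real.log_pow, hlogs]
    have e2 : Real.log (t ^ (n + 1) / U (n + 1))
        = (n + 1 : ℕ) * Real.log t - Real.log (U (n + 1)) := by
      rw [Real.log_div (by positivity) (hUpos _).ne', Real.log_pow]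
    have hineq := le_trans hTk hT
    rw [e1, e2] at hineq
    have hτinv : τ * τ⁻¹ = 1 := mul_inv_cancel₀ hτ0.ne'
    have h2 : τ * (↑(n + 1) * (τ⁻¹ * Real.log t) - Real.log (T (n + 1)))
        ≤ τ * (τ⁻¹ * (↑(n + 1) * Real.log t - Real.log (U (n + 1))) + C) :=
      mul_le_mul_of_nonneg_left hineq hτ0.le
    have e3 : τ * (↑(n + 1) * (τ⁻¹ * Real.log t) - Real.log (T (n + 1)))
        = ↑(n + 1) * Real.log t - τ * Real.log (T (n + 1)) := by
      field_simp
    have e4 : τ * (τ⁻¹ * (↑(n + 1) * Real.log t - Real.log (U (n + 1))) + C)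
        = ↑(n + 1) * Real.log t - Real.log (U (n + 1)) + τ * C := by
      field_simp
    rw [e3, e4] at h2
    have key : Real.log (U (n + 1)) ≤ τ * Real.log (T (n + 1)) + C * τ := by
      linarith
    calc U (n + 1) = Real.exp (Real.log (U (n + 1))) := (Real.exp_log (hUpos _)).symm
      _ ≤ Real.exp (C * τ + τ * Real.log (T (n + 1))) :=
          Real.exp_le_exp.2 (by linarith)
      _ = Real.exp (C * τ) * T (n + 1) ^ τ := by
          rw [Real.exp_add, Real.rpow_def_of_pos (hTpos _), mul_comm (Real.log (T (n + 1))) τ]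
end

section
/- Let T and U be weight sequences, τ > 1, and suppose there is A ≥ 1 with U_k ≤ A (T_k)^τ for all k. Then for every 0 < a < 1 and every σ > τ there exists C ≥ 1 such that ω_T(s) ≤ τ^{-1} ω_U(a s^σ) + C for all s ≥ 0. -/
private lemma bddAbove_logterms (M : ℕ → ℝ) (hpos : ∀ k, 0 < M k)
    (hlim : Filter.Tendsto (fun k => M (k + 1) / M k) Filter.atTop Filter.atTop)
    (t : ℝ) (ht : 0 < t) :
    BddAbove (Set.range fun k : ℕ => Real.log (t ^ k / M k)) := by
  obtain ⟨N, hN⟩ := Filter.eventually_atTop.mp (hlim.eventually_ge_atTop (t + 1))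
  set c : ℝ := (Finset.range (N + 1)).sup' (by simp) (fun k => t ^ k / M k) with hc
  have key : ∀ k, t ^ k / M k ≤ c := by
    intro k
    induction k with
    | zero => exact Finset.le_sup' (fun k => t ^ k / M k) (by simp)
    | succ n ih =>
      rcases le_or_gt (n + 1) N with hle | hlt
      · exact Finset.le_sup' (fun k => t ^ k / M k)
          (Finset.mem_range.mpr (by omega))
      · have hn : N ≤ n := by omega
        have hMn := hpos n
        have hMn1 := hpos (n + 1)
        have h1 : (t + 1) * M n ≤ M (n + 1) := by
          have := hN n hn
          rw [le_div_iff₀ (hpos n)] at this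
          linarith
        have h2 : t ^ (n + 1) / M (n + 1) ≤ t ^ (n + 1) / ((t + 1) * M n) := by
          apply div_le_div_of_nonneg_left (by positivity) (by positivity) h1
        have h3 : t ^ (n + 1) / ((t + 1) * M n) ≤ t ^ n / M n := by
          rw [div_le_div_iff₀ (by positivity) (hpos n)]
          have hp : (0:ℝ) ≤ t ^ n * M n := by positivity
          have : t ^ (n + 1) = t ^ n * t := by ring
          nlinarith [pow_nonneg ht.le n, (hpos n).le]
        linarith
  refine ⟨Real.log c, ?_⟩
  rintro x ⟨k, rfl⟩
  have hMk := hpos k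
  exact Real.log_le_log (by positivity) (key k)

private lemma term_le_assocOmega (M : ℕ → ℝ) (hpos : ∀ k, 0 < M k)
    (hlim : Filter.Tendsto (fun k => M (k + 1) / M k) Filter.atTop Filter.atTop)
    (t : ℝ) (ht : 0 < t) (k : ℕ) :
    Real.log (t ^ k / M k) ≤ assocOmega M t := by
  rw [assocOmega, if_neg ht.ne']
  exact le_ciSup (bddAbove_logterms M hpos hlim t ht) k

private lemma assocOmega_nonneg (M : ℕ → ℝ) (hpos : ∀ k, 0 < M k) (hM0 : M 0 = 1)
    (hlim : Filter.Tendsto (fun k => M (k + 1) / M k) Filter.atTop Filter.atTop)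
    (t : ℝ) (ht : 0 ≤ t) : 0 ≤ assocOmega M t := by
  rcases eq_or_lt_of_le ht with h0 | h0
  · simp [assocOmega, ← h0]
  · have := term_le_assocOmega M hpos hlim t h0 0
    simpa [hM0] using this

private lemma assocOmega_mono (M : ℕ → ℝ) (hpos : ∀ k, 0 < M k) (hM0 : M 0 = 1)
    (hlim : Filter.Tendsto (fun k => M (k + 1) / M k) Filter.atTop Filter.atTop)
    {s B : ℝ} (hs : 0 ≤ s) (hB : 0 < B) (hsB : s ≤ B) :
    assocOmega M s ≤ assocOmega M B := by
  rcases eq_or_lt_of_le hs with h0 | h0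
  · rw [assocOmega, if_pos h0.symm]
    exact assocOmega_nonneg M hpos hM0 hlim B hB.le
  · rw [assocOmega, if_neg h0.ne']
    apply ciSup_le
    intro k
    refine le_trans ?_ (term_le_assocOmega M hpos hlim B hB k)
    have hMk := hpos k
    apply Real.log_le_log (by positivity)
    gcongr

theorem omega_bound_with_larger_exponent (T U : ℕ → ℝ)
    (hTpos : ∀ k, 0 < T k) (hT0 : T 0 = 1) (hT1 : 1 ≤ T 1)
    (hTmono : Monotone fun k => T (k + 1) / T k)
    (hTlim : Filter.Tendsto (fun k => T (k + 1) / T k) Filter.atTop Filter.atTop)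
    (hUpos : ∀ k, 0 < U k) (hU0 : U 0 = 1) (hU1 : 1 ≤ U 1)
    (hUmono : Monotone fun k => U (k + 1) / U k)
    (hUlim : Filter.Tendsto (fun k => U (k + 1) / U k) Filter.atTop Filter.atTop)
    (τ : ℝ) (hτ : 1 < τ) (A : ℝ) (hA : 1 ≤ A)
    (h : ∀ k : ℕ, U k ≤ A * T k ^ τ) :
    ∀ a σ : ℝ, 0 < a → a < 1 → τ < σ →
      ∃ C : ℝ, 1 ≤ C ∧ ∀ s : ℝ, 0 ≤ s →
        assocOmega T s ≤ τ⁻¹ * assocOmega U (a * s ^ σ) + C := by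
  intro a σ ha ha1 hσ
  have hτ0 : (0:ℝ) < τ := by linarith
  have hτinv : (0:ℝ) ≤ τ⁻¹ := by positivity
  set B : ℝ := max 1 (Real.exp ((-Real.log a) / (σ - τ))) with hBdef
  have hB1 : (1:ℝ) ≤ B := le_max_left _ _
  have hB0 : (0:ℝ) < B := by linarith
  have hlogB : (-Real.log a) / (σ - τ) ≤ Real.log B := by
    have := Real.log_le_log (Real.exp_pos _) (le_max_right 1 (Real.exp ((-Real.log a) / (σ - τ))))
    rwa [Real.log_exp] at this
  have hlogA : (0:ℝ) ≤ Real.log A := Real.log_nonneg hA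
  refine ⟨max 1 (τ⁻¹ * Real.log A + assocOmega T B), le_max_left _ _, ?_⟩
  intro s hs
  set C := max 1 (τ⁻¹ * Real.log A + assocOmega T B) with hC
  have hωTB : 0 ≤ assocOmega T B := assocOmega_nonneg T hTpos hT0 hTlim B hB0.le
  have hωU : 0 ≤ assocOmega U (a * s ^ σ) := by
    apply assocOmega_nonneg U hUpos hU0 hUlim
    positivity
  rcases le_or_gt B s with hBs | hsB
  · -- s ≥ B ≥ 1
    have hs0 : (0:ℝ) < s := by linarith
    have hx0 : (0:ℝ) < a * s ^ σ := by positivity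
    have hlogs : (-Real.log a) / (σ - τ) ≤ Real.log s :=
      hlogB.trans (Real.log_le_log hB0 hBs)
    have hlogs' : -Real.log a ≤ (σ - τ) * Real.log s := by
      rw [div_le_iff₀ (by linarith)] at hlogs
      linarith
    rw [assocOmega, if_neg hs0.ne']
    apply ciSup_le
    intro k
    have hterm : Real.log ((a * s ^ σ) ^ k / U k) ≤ assocOmega U (a * s ^ σ) :=
      term_le_assocOmega U hUpos hUlim _ hx0 k
    have hlogU : Real.log (U k) ≤ Real.log A + τ * Real.log (T k) := by
      have hTk := hTpos k
      have := Real.log_le_log (hUpos k) (h k)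
      rwa [Real.log_mul (by linarith) (by positivity), Real.log_rpow (hTpos k)] at this
    have e1 : Real.log (s ^ k / T k) = k * Real.log s - Real.log (T k) := by
      rw [Real.log_div (by positivity) (hTpos k).ne', Real.log_pow]
    have e2 : Real.log ((a * s ^ σ) ^ k / U k)
        = k * (Real.log a + σ * Real.log s) - Real.log (U k) := by
      rw [Real.log_div (by positivity) (hUpos k).ne', Real.log_pow,
        Real.log_mul ha.ne' (by positivity), Real.log_rpow hs0]
    have key : Real.log (s ^ k / T k)
        ≤ τ⁻¹ * Real.log ((a * s ^ σ) ^ k / U k) + τ⁻¹ * Real.log A := by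
      rw [e1, e2]
      have hk0 : (0:ℝ) ≤ (k:ℝ) := Nat.cast_nonneg k
      rw [← sub_nonneg]
      have expand : τ⁻¹ * ((k:ℝ) * (Real.log a + σ * Real.log s) - Real.log (U k))
          + τ⁻¹ * Real.log A - ((k:ℝ) * Real.log s - Real.log (T k))
          = τ⁻¹ * ((k:ℝ) * (Real.log a + (σ - τ) * Real.log s)
            + (Real.log A + τ * Real.log (T k) - Real.log (U k))) := by
        field_simp
        ring
      rw [expand]
      have h1 : 0 ≤ Real.log a + (σ - τ) * Real.log s := by linarith
      have h2 : 0 ≤ Real.log A + τ * Real.log (T k) - Real.log (U k) := by linarith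
      exact mul_nonneg hτinv (add_nonneg (mul_nonneg hk0 h1) h2)
    calc Real.log (s ^ k / T k)
        ≤ τ⁻¹ * Real.log ((a * s ^ σ) ^ k / U k) + τ⁻¹ * Real.log A := key
      _ ≤ τ⁻¹ * assocOmega U (a * s ^ σ) + τ⁻¹ * Real.log A := by
          have := mul_le_mul_of_nonneg_left hterm hτinv
          linarith
      _ ≤ τ⁻¹ * assocOmega U (a * s ^ σ) + C := by
          have : τ⁻¹ * Real.log A ≤ C := by
            refine le_trans ?_ (le_max_right 1 _)
            linarith
          linarith
  · -- s < B
    have h1 : assocOmega T s ≤ assocOmega T B :=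
      assocOmega_mono T hTpos hT0 hTlim hs hB0 hsB.le
    have h2 : assocOmega T B ≤ C := by
      refine le_trans ?_ (le_max_right 1 _)
      nlinarith
    nlinarith [mul_nonneg hτinv hωU]
end

section
/- Let M be a weight sequence and τ > 0, and define γ(M) = sup{γ > 0 : the sequence (μ_k / k^γ)_k is almost increasing} (with γ(M) = 0 if the set is empty, ∞ if unbounded), where μ_k = M_k/M_{k-1}. Then γ(M^τ) = τ · γ(M), where (M^τ)_k = (M_k)^τ. -/
def AlmostIncreasing (L : ℕ → ℝ) : Prop :=
  ∃ C : ℝ, 0 < C ∧ ∀ j k : ℕ, j ≤ k → L j ≤ C * L k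

/-- The Thilliez growth index `γ(M)`, using the quotient sequence `μ_{k+1} = M (k+1) / M k`. -/
noncomputable def gammaIndex (M : ℕ → ℝ) : ENNReal :=
  sSup (ENNReal.ofReal ''
    {γ : ℝ | 0 < γ ∧ AlmostIncreasing fun k => M (k + 1) / M k / ((k : ℝ) + 1) ^ γ})

lemma ai_rpow_of {L : ℕ → ℝ} (hL : ∀ k, 0 < L k) {τ : ℝ} (hτ : 0 < τ)
    (h : AlmostIncreasing L) : AlmostIncreasing (fun k => L k ^ τ) := by
  obtain ⟨C, hC, hCle⟩ := h
  refine ⟨C ^ τ, Real.rpow_pos_of_pos hC τ, fun j k hjk => ?_⟩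
  rw [← Real.mul_rpow hC.le (hL k).le]
  exact Real.rpow_le_rpow (hL j).le (hCle j k hjk) hτ.le

lemma ai_rpow {L : ℕ → ℝ} (hL : ∀ k, 0 < L k) {τ : ℝ} (hτ : 0 < τ) :
    AlmostIncreasing (fun k => L k ^ τ) ↔ AlmostIncreasing L := by
  constructor
  · intro h
    have := ai_rpow_of (L := fun k => L k ^ τ)
      (fun k => Real.rpow_pos_of_pos (hL k) τ) (inv_pos.mpr hτ) h
    simpa [Real.rpow_rpow_inv (hL _).le hτ.ne'] using this
  · exact ai_rpow_of hL hτ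

theorem gammaIndex_pow (M : ℕ → ℝ)
    (hpos : ∀ k, 0 < M k) (hM0 : M 0 = 1) (hM1 : 1 ≤ M 1)
    (hmono : Monotone fun k => M (k + 1) / M k)
    (hlim : Filter.Tendsto (fun k => M (k + 1) / M k) Filter.atTop Filter.atTop)
    (τ : ℝ) (hτ : 0 < τ) :
    gammaIndex (fun k => M k ^ τ) = ENNReal.ofReal τ * gammaIndex M := by
  set S : Set ℝ := {γ : ℝ | 0 < γ ∧
      AlmostIncreasing fun k => M (k + 1) / M k / ((k : ℝ) + 1) ^ γ} with hS
  have key : ∀ γ : ℝ, (AlmostIncreasing fun k =>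
      M (k + 1) ^ τ / M k ^ τ / ((k : ℝ) + 1) ^ γ) ↔
      AlmostIncreasing fun k => M (k + 1) / M k / ((k : ℝ) + 1) ^ (γ / τ) := by
    intro γ
    have hfun : (fun k => M (k + 1) ^ τ / M k ^ τ / ((k : ℝ) + 1) ^ γ) =
        fun k => (M (k + 1) / M k / ((k : ℝ) + 1) ^ (γ / τ)) ^ τ := by
      funext k
      have hk : (0:ℝ) ≤ (k : ℝ) + 1 := by positivity
      have hexp : ((k:ℝ) + 1) ^ γ = (((k:ℝ) + 1) ^ (γ / τ)) ^ τ := by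
        rw [← Real.rpow_mul hk, div_mul_cancel₀ γ hτ.ne']
      rw [hexp, Real.div_rpow (div_nonneg (hpos _).le (hpos _).le) (Real.rpow_nonneg hk _),
        Real.div_rpow (hpos (k+1)).le (hpos k).le]
    rw [hfun]
    exact ai_rpow (fun k => div_pos (div_pos (hpos _) (hpos _))
      (Real.rpow_pos_of_pos (by positivity) _)) hτ
  have hset : {γ : ℝ | 0 < γ ∧
      AlmostIncreasing fun k =>
        M (k + 1) ^ τ / M k ^ τ / ((k : ℝ) + 1) ^ γ} = (fun x => τ * x) '' S := by
    ext γ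
    constructor
    · rintro ⟨hγ, hai⟩
      exact ⟨γ / τ, ⟨div_pos hγ hτ, (key γ).mp hai⟩, by field_simp⟩
    · rintro ⟨x, ⟨hx, hai⟩, rfl⟩
      refine ⟨mul_pos hτ hx, (key (τ * x)).mpr ?_⟩
      simpa [mul_div_cancel_left₀ x hτ.ne'] using hai
  simp only [gammaIndex]
  rw [show (ENNReal.ofReal '' {γ : ℝ | 0 < γ ∧ AlmostIncreasing fun k =>
        (fun k => M k ^ τ) (k + 1) / (fun k => M k ^ τ) k / ((k : ℝ) + 1) ^ γ}) =
      ENNReal.ofReal '' ((fun x => τ * x) '' S) from by rw [← hset]]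
  rw [Set.image_image]
  simp only [ENNReal.ofReal_mul hτ.le]
  rw [sSup_image, ENNReal.mul_sSup]
  rw [show (⨆ b ∈ ENNReal.ofReal '' S, ENNReal.ofReal τ * b) =
      ⨆ x ∈ S, ENNReal.ofReal τ * ENNReal.ofReal x from iSup_image]
end

section
/- For the weight sequence N^{q,r} given by N^{q,r}_k = q^{k^r} with q > 1 and r > 1, the condition sup_{k≥1} (N_k/N_{k-1})^{1/k} < ∞ holds if and only if 1 < r ≤ 2. -/
theorem qkr_derivation_closed_iff (q r : ℝ) (hq : 1 < q) (hr : 1 < r) :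
    (∃ B : ℝ, ∀ k : ℕ, 1 ≤ k →
        (q ^ ((k : ℝ) ^ r) / q ^ (((k : ℝ) - 1) ^ r)) ^ ((1 : ℝ) / (k : ℝ)) ≤ B) ↔
      r ≤ 2 := by
  have hq0 : (0 : ℝ) < q := lt_trans one_pos hq
  have key : ∀ k : ℕ, 1 ≤ k →
      (q ^ ((k : ℝ) ^ r) / q ^ (((k : ℝ) - 1) ^ r)) ^ ((1 : ℝ) / (k : ℝ))
        = q ^ (((k : ℝ) ^ r - ((k : ℝ) - 1) ^ r) * ((1 : ℝ) / (k : ℝ))) := by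
    intro k hk
    rw [← Real.rpow_sub hq0, ← Real.rpow_mul hq0.le]
  constructor
  · -- boundedness implies r ≤ 2
    rintro ⟨B, hB⟩
    by_contra h2
    push_neg at h2
    have ht : (0 : ℝ) < r - 2 := by linarith
    -- For every k ≥ 2, q ^ ((k:ℝ) ^ (r - 2)) ≤ B
    have hbound : ∀ k : ℕ, 2 ≤ k → q ^ ((k : ℝ) ^ (r - 2)) ≤ B := by
      intro k hk
      have hk1 : 1 ≤ k := le_trans (by norm_num) hk
      have hx2 : (2 : ℝ) ≤ (k : ℝ) := by exact_mod_cast hk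
      have hx0 : (0 : ℝ) < (k : ℝ) := by linarith
      have hx10 : (0 : ℝ) ≤ (k : ℝ) - 1 := by linarith
      set x : ℝ := (k : ℝ) with hxdef
      -- (x-1)^r ≤ (x-1) * x^(r-1)
      have h1 : (x - 1) ^ r ≤ (x - 1) * x ^ (r - 1) := by
        have : (x - 1) ^ r = (x - 1) ^ (1 : ℝ) * (x - 1) ^ (r - 1) := by
          rw [← Real.rpow_add (by linarith : (0:ℝ) < x - 1)]
          ring_nf
        rw [this, Real.rpow_one]
        have h2' : (x - 1) ^ (r - 1) ≤ x ^ (r - 1) :=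
          Real.rpow_le_rpow hx10 (by linarith) (by linarith)
        exact mul_le_mul_of_nonneg_left h2' (by linarith)
      -- x^(r-1) ≤ x^r - (x-1)^r
      have h3 : x ^ (r - 1) * x = x ^ r := by
        rw [← Real.rpow_add_one hx0.ne' (r - 1)]
        ring_nf
      have h4 : x ^ (r - 1) ≤ x ^ r - (x - 1) ^ r := by
        have : (x - 1) * x ^ (r - 1) = x ^ (r - 1) * x - x ^ (r - 1) := by ring
        nlinarith [h1, h3]
      -- hence x^(r-2) ≤ (x^r - (x-1)^r) * (1/x)
      have h5 : x ^ (r - 2) ≤ (x ^ r - (x - 1) ^ r) * (1 / x) := by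
        rw [mul_one_div, le_div_iff₀ hx0]
        have h6 : x ^ (r - 2) * x = x ^ (r - 1) := by
          rw [← Real.rpow_add_one hx0.ne' (r - 2)]
          ring_nf
        rw [h6]; exact h4
      have := hB k hk1
      rw [key k hk1] at this
      calc q ^ (x ^ (r - 2)) ≤ q ^ ((x ^ r - (x - 1) ^ r) * (1 / x)) :=
            Real.rpow_le_rpow_of_exponent_le hq.le h5
        _ ≤ B := this
    -- contradiction: q ^ (k ^ (r-2)) is unbounded
    set B' : ℝ := max B 1 + 1 with hB'def
    have hB'pos : (0 : ℝ) < B' := by positivity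
    have hB'gt : B < B' := lt_of_le_of_lt (le_max_left B 1) (by linarith)
    set y : ℝ := max (Real.logb q B') 0 with hydef
    have hy0 : 0 ≤ y := le_max_right _ _
    obtain ⟨k, hk⟩ := exists_nat_ge (max 2 (y ^ (1 / (r - 2))))
    have hk2 : 2 ≤ k := by
      have : (2 : ℝ) ≤ (k : ℝ) := le_trans (le_max_left _ _) hk
      exact_mod_cast this
    have hky : y ≤ (k : ℝ) ^ (r - 2) := by
      have h7 : y ^ (1 / (r - 2)) ≤ (k : ℝ) := le_trans (le_max_right _ _) hk
      have h8 : (y ^ (1 / (r - 2))) ^ (r - 2) ≤ (k : ℝ) ^ (r - 2) :=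
        Real.rpow_le_rpow (Real.rpow_nonneg hy0 _) h7 ht.le
      rwa [← Real.rpow_mul hy0, one_div_mul_cancel ht.ne', Real.rpow_one] at h8
    have h9 : B' ≤ q ^ ((k : ℝ) ^ (r - 2)) := by
      have : B' = q ^ Real.logb q B' := (Real.rpow_logb hq0 hq.ne' hB'pos).symm
      rw [this]
      exact Real.rpow_le_rpow_of_exponent_le hq.le (le_trans (le_max_left _ _) hky)
    have := hbound k hk2
    linarith
  · -- r ≤ 2 implies bounded by q ^ r
    intro hr2
    refine ⟨q ^ r, fun k hk => ?_⟩
    rw [key k hk]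
    apply Real.rpow_le_rpow_of_exponent_le hq.le
    have hx1 : (1 : ℝ) ≤ (k : ℝ) := by exact_mod_cast hk
    have hx0 : (0 : ℝ) < (k : ℝ) := by linarith
    set x : ℝ := (k : ℝ) with hxdef
    -- Bernoulli: 1 - r/x ≤ (1 - 1/x)^r
    have hb : 1 + r * (-(1 / x)) ≤ (1 + (-(1 / x))) ^ r :=
      one_add_mul_self_le_rpow_one_add (by
        have : 1 / x ≤ 1 := by
          rw [div_le_one hx0]; exact hx1
        linarith) hr.le
    -- multiply by x^r
    have hxr : (0 : ℝ) < x ^ r := Real.rpow_pos_of_pos hx0 r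
    have hmul : x ^ r * (1 + (-(1 / x))) ^ r = (x - 1) ^ r := by
      rw [← Real.mul_rpow hx0.le (by
        have : 1 / x ≤ 1 := by rw [div_le_one hx0]; exact hx1
        linarith)]
      congr 1
      field_simp
      ring
    have h10 : x ^ r * (1 + r * (-(1 / x))) ≤ (x - 1) ^ r := by
      calc x ^ r * (1 + r * (-(1 / x))) ≤ x ^ r * (1 + (-(1 / x))) ^ r :=
            mul_le_mul_of_nonneg_left hb hxr.le
        _ = (x - 1) ^ r := hmul
    have h11 : x ^ r * (1 / x) = x ^ (r - 1) := by
      rw [mul_one_div, ← Real.rpow_sub_one hx0.ne' r]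
    have h12 : x ^ r - r * x ^ (r - 1) ≤ (x - 1) ^ r := by
      have : x ^ r * (1 + r * (-(1 / x))) = x ^ r - r * (x ^ r * (1 / x)) := by ring
      rw [this, h11] at h10
      exact h10
    have h13 : x ^ (r - 1) ≤ x := by
      calc x ^ (r - 1) ≤ x ^ (1 : ℝ) :=
            Real.rpow_le_rpow_of_exponent_le hx1 (by linarith)
        _ = x := Real.rpow_one x
    -- conclude: (x^r - (x-1)^r) * (1/x) ≤ r
    rw [mul_one_div, div_le_iff₀ hx0]
    nlinarith [h12, h13, hr.le]
end

section
/- Let N be a weight sequence with associated weight h_N(t) = inf_k t^k N_k (t > 0), h_N(0) = 0, and let Φ : (0,∞) → ℝ be continuous with 0 < Φ(t) and A_1 h_N(B_1/t) ≤ Φ(t) ≤ A_2 h_N(B_2/t) for constants A_1, A_2, B_1, B_2 > 0 and all t > 0. Then there is a constant Q_1 > 0 such that Q_1^{k+1} N_k ≤ ∫_0^∞ t^k Φ(t) dt for all k ∈ ℕ. -/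
open MeasureTheory

theorem moments_lower_bound_of_optimal_flat_kernel (N : ℕ → ℝ)
    (hpos : ∀ k, 0 < N k) (hN0 : N 0 = 1) (hN1 : 1 ≤ N 1)
    (hmono : Monotone fun k => N (k + 1) / N k)
    (hlim : Filter.Tendsto (fun k => N (k + 1) / N k) Filter.atTop Filter.atTop)
    (Φ : ℝ → ℝ) (hΦcont : ContinuousOn Φ (Set.Ioi 0))
    (A1 A2 B1 B2 : ℝ) (hA1 : 0 < A1) (hA2 : 0 < A2) (hB1 : 0 < B1) (hB2 : 0 < B2)
    (hΦpos : ∀ t : ℝ, 0 < t → 0 < Φ t)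
    (hlower : ∀ t : ℝ, 0 < t → A1 * (⨅ k : ℕ, (B1 / t) ^ k * N k) ≤ Φ t)
    (hupper : ∀ t : ℝ, 0 < t → Φ t ≤ A2 * (⨅ k : ℕ, (B2 / t) ^ k * N k)) :
    ∃ Q1 : ℝ, 0 < Q1 ∧ ∀ k : ℕ,
      Q1 ^ (k + 1) * N k ≤ ∫ t in Set.Ioi (0 : ℝ), t ^ k * Φ t := by
  set r : ℕ → ℝ := fun k => N (k + 1) / N k with hr
  have hrpos : ∀ k, 0 < r k := fun k => div_pos (hpos _) (hpos _)
  have hr1 : ∀ k, 1 ≤ r k := by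
    intro k
    have h0 : r 0 = N 1 := by simp [hr, hN0]
    calc (1:ℝ) ≤ r 0 := by rw [h0]; exact hN1
      _ ≤ r k := hmono (Nat.zero_le k)
  have hNsucc : ∀ j, N (j + 1) = N j * r j := by
    intro j
    rw [hr]
    rw [mul_comm (N j), div_mul_cancel₀ _ (hpos j).ne']
  -- bdd below of the B2 infimum family
  have hbdd2 : ∀ t : ℝ, 0 < t → BddBelow (Set.range fun j : ℕ => (B2 / t) ^ j * N j) := by
    intro t ht
    refine ⟨0, ?_⟩
    rintro x ⟨j, rfl⟩
    exact mul_nonneg (pow_nonneg (by positivity) j) (hpos j).le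
  have hΦleA2 : ∀ t : ℝ, 0 < t → Φ t ≤ A2 := by
    intro t ht
    have h1 : (⨅ j : ℕ, (B2 / t) ^ j * N j) ≤ 1 := by
      have := ciInf_le (hbdd2 t ht) 0
      simpa [hN0] using this
    calc Φ t ≤ A2 * (⨅ j : ℕ, (B2 / t) ^ j * N j) := hupper t ht
      _ ≤ A2 * 1 := mul_le_mul_of_nonneg_left h1 hA2.le
      _ = A2 := mul_one A2
  have hΦdecay : ∀ k : ℕ, ∀ t : ℝ, 0 < t → Φ t ≤ A2 * ((B2 / t) ^ (k + 2) * N (k + 2)) := by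
    intro k t ht
    calc Φ t ≤ A2 * (⨅ j : ℕ, (B2 / t) ^ j * N j) := hupper t ht
      _ ≤ A2 * ((B2 / t) ^ (k + 2) * N (k + 2)) :=
        mul_le_mul_of_nonneg_left (ciInf_le (hbdd2 t ht) (k + 2)) hA2.le
  refine ⟨min (A1 * B1 / 2) (B1 / 2), lt_min (by positivity) (by positivity), ?_⟩
  intro k
  -- measurability
  have hmeasIoi : AEStronglyMeasurable (fun t => t ^ k * Φ t) (volume.restrict (Set.Ioi (0:ℝ))) :=
    (((continuous_pow k).continuousOn).mul hΦcont).aestronglyMeasurable measurableSet_Ioi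
  have hcontOn : ContinuousOn (fun t => t ^ k * Φ t) (Set.Ioi (0:ℝ)) :=
    ((continuous_pow k).continuousOn).mul hΦcont
  -- integrability on (0,1]
  have hInt1 : IntegrableOn (fun t => t ^ k * Φ t) (Set.Ioc (0:ℝ) 1) := by
    have hm : AEStronglyMeasurable (fun t => t ^ k * Φ t)
        (volume.restrict (Set.Ioc (0:ℝ) 1)) :=
      (hcontOn.mono Set.Ioc_subset_Ioi_self).aestronglyMeasurable measurableSet_Ioc
    have hbd : ∀ᵐ t ∂(volume.restrict (Set.Ioc (0:ℝ) 1)), ‖t ^ k * Φ t‖ ≤ A2 := by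
      filter_upwards [ae_restrict_mem measurableSet_Ioc] with t ht
      have ht0 : 0 < t := ht.1
      rw [Real.norm_eq_abs, abs_of_nonneg (mul_nonneg (pow_nonneg ht0.le k) (hΦpos t ht0).le)]
      calc t ^ k * Φ t ≤ 1 * A2 := by
            apply mul_le_mul (pow_le_one₀ ht0.le ht.2) (hΦleA2 t ht0) (hΦpos t ht0).le zero_le_one
        _ = A2 := one_mul A2
    exact ⟨hm, HasFiniteIntegral.restrict_of_bounded (C := A2) measure_Ioc_lt_top hbd⟩
  -- integrability on (1,∞)
  have hInt2 : IntegrableOn (fun t => t ^ k * Φ t) (Set.Ioi (1:ℝ)) := by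
    set C : ℝ := A2 * (B2 ^ (k + 2) * N (k + 2)) with hC
    have hC0 : 0 ≤ C := by
      have := (hpos (k + 2)).le
      positivity
    have hg : IntegrableOn (fun t : ℝ => C * t ^ (-2 : ℝ)) (Set.Ioi 1) :=
      (integrableOn_Ioi_rpow_of_lt (by norm_num) one_pos).const_mul C
    apply hg.integrable.mono
      ((hcontOn.mono (Set.Ioi_subset_Ioi zero_le_one)).aestronglyMeasurable measurableSet_Ioi)
    filter_upwards [ae_restrict_mem measurableSet_Ioi] with t ht
    have ht0 : (0:ℝ) < t := lt_trans one_pos ht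
    have hrpow : t ^ (-2 : ℝ) = (t ^ 2)⁻¹ := by
      rw [show (-2 : ℝ) = -((2:ℕ):ℝ) by norm_num, Real.rpow_neg ht0.le, Real.rpow_natCast]
    rw [Real.norm_eq_abs, Real.norm_eq_abs,
      abs_of_nonneg (mul_nonneg (pow_nonneg ht0.le k) (hΦpos t ht0).le),
      abs_of_nonneg (mul_nonneg hC0 (by positivity))]
    have hΦb := hΦdecay k t ht0
    have key : t ^ k * (A2 * ((B2 / t) ^ (k + 2) * N (k + 2))) = C * t ^ (-2 : ℝ) := by
      rw [hrpow, hC, div_pow]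
      field_simp
      ring
    calc t ^ k * Φ t ≤ t ^ k * (A2 * ((B2 / t) ^ (k + 2) * N (k + 2))) :=
          mul_le_mul_of_nonneg_left hΦb (pow_nonneg ht0.le k)
      _ = C * t ^ (-2 : ℝ) := key
  have hInt : IntegrableOn (fun t => t ^ k * Φ t) (Set.Ioi (0:ℝ)) := by
    rw [← Set.Ioc_union_Ioi_eq_Ioi (zero_le_one : (0:ℝ) ≤ 1)]
    exact hInt1.union hInt2
  -- the interval
  obtain ⟨a, b, ha, hb⟩ : ∃ a b : ℝ, a = B1 * r k / 2 ∧ b = B1 * r k := ⟨_, _, rfl, rfl⟩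
  have ha0 : 0 < a := by rw [ha]; exact div_pos (mul_pos hB1 (hrpos k)) two_pos
  have hab : a ≤ b := by
    rw [ha, hb]; nlinarith [hrpos k, hB1]
  have hsub : Set.Icc a b ⊆ Set.Ioi (0:ℝ) := fun x hx => lt_of_lt_of_le ha0 hx.1
  -- pointwise lower bound on [a,b]
  have key : ∀ t ∈ Set.Icc a b, A1 * (B1 ^ k * N k / 2 ^ k) ≤ t ^ k * Φ t := by
    intro t ht
    have ht0 : 0 < t := hsub ht
    set s : ℝ := B1 / t with hs
    have hs0 : 0 < s := div_pos hB1 ht0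
    have hslb : 1 / r k ≤ s := by
      rw [hs, div_le_div_iff₀ (hrpos k) ht0]
      calc 1 * t ≤ b := by simpa using ht.2
        _ = B1 * r k := hb
    have hsub' : s ≤ 2 / r k := by
      rw [hs, div_le_div_iff₀ ht0 (hrpos k)]
      calc B1 * r k = 2 * a := by rw [ha]; ring
        _ ≤ 2 * t := by nlinarith [ht.1]
    -- lemma A: for j ≥ k
    have hauxA : ∀ j, k ≤ j → s ^ k * N k ≤ s ^ j * N j := by
      intro j hj
      induction j, hj using Nat.le_induction with
      | base => exact le_refl _
      | succ j hj ih =>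
        have h1 : (1:ℝ) ≤ s * r j := by
          have hrk : r k ≤ r j := hmono hj
          calc (1:ℝ) = (1 / r k) * r k := by
                rw [one_div, inv_mul_cancel₀ (hrpos k).ne']
            _ ≤ s * r j := by
              apply mul_le_mul hslb hrk (hrpos k).le hs0.le
        calc s ^ k * N k ≤ s ^ j * N j := ih
          _ ≤ (s ^ j * N j) * (s * r j) :=
            le_mul_of_one_le_right (mul_nonneg (pow_nonneg hs0.le j) (hpos j).le) h1
          _ = s ^ (j + 1) * N (j + 1) := by rw [hNsucc j, pow_succ]; ring
    -- lemma B: downward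
    have hauxB : ∀ d, d ≤ k → s ^ k * N k ≤ 2 ^ d * (s ^ (k - d) * N (k - d)) := by
      intro d
      induction d with
      | zero => intro _; simp
      | succ d ih =>
        intro hdk
        have hd : d ≤ k := Nat.le_of_succ_le hdk
        set j := k - (d + 1) with hj
        have hkd : k - d = j + 1 := by omega
        have hjk : j ≤ k := by omega
        have h2 : s * r j ≤ 2 := by
          have hrk : r j ≤ r k := hmono hjk
          calc s * r j ≤ (2 / r k) * r k := by
                apply mul_le_mul hsub' hrk (hrpos j).le (div_pos two_pos (hrpos k)).le
            _ = 2 := by rw [div_mul_cancel₀ _ (hrpos k).ne']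
        calc s ^ k * N k ≤ 2 ^ d * (s ^ (k - d) * N (k - d)) := ih hd
          _ = 2 ^ d * ((s ^ j * N j) * (s * r j)) := by
              rw [hkd, hNsucc j, pow_succ]; ring
          _ ≤ 2 ^ d * ((s ^ j * N j) * 2) := by
              apply mul_le_mul_of_nonneg_left _ (by positivity)
              exact mul_le_mul_of_nonneg_left h2
                (mul_nonneg (pow_nonneg hs0.le j) (hpos j).le)
          _ = 2 ^ (d + 1) * (s ^ j * N j) := by ring
    have hcomb : ∀ j : ℕ, s ^ k * N k ≤ 2 ^ k * (s ^ j * N j) := by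
      intro j
      rcases le_or_gt k j with h | h
      · calc s ^ k * N k ≤ s ^ j * N j := hauxA j h
          _ ≤ 2 ^ k * (s ^ j * N j) :=
            le_mul_of_one_le_left (mul_nonneg (pow_nonneg hs0.le j) (hpos j).le)
              (one_le_pow₀ (by norm_num : (1:ℝ) ≤ 2))
      · have hd : k - j ≤ k := Nat.sub_le k j
        have hkj : k - (k - j) = j := by omega
        calc s ^ k * N k ≤ 2 ^ (k - j) * (s ^ (k - (k - j)) * N (k - (k - j))) := hauxB (k - j) hd
          _ = 2 ^ (k - j) * (s ^ j * N j) := by rw [hkj]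
          _ ≤ 2 ^ k * (s ^ j * N j) := by
            apply mul_le_mul_of_nonneg_right _ (mul_nonneg (pow_nonneg hs0.le j) (hpos j).le)
            exact pow_le_pow_right₀ (by norm_num) hd
    have hinfge : s ^ k * N k / 2 ^ k ≤ ⨅ j : ℕ, s ^ j * N j := by
      apply le_ciInf
      intro j
      rw [div_le_iff₀ (by positivity : (0:ℝ) < 2 ^ k)]
      calc s ^ k * N k ≤ 2 ^ k * (s ^ j * N j) := hcomb j
        _ = s ^ j * N j * 2 ^ k := by ring
    have hΦlb : A1 * (s ^ k * N k / 2 ^ k) ≤ Φ t := by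
      calc A1 * (s ^ k * N k / 2 ^ k) ≤ A1 * ⨅ j : ℕ, s ^ j * N j :=
            mul_le_mul_of_nonneg_left hinfge hA1.le
        _ ≤ Φ t := hlower t ht0
    have hpow : t ^ k * s ^ k = B1 ^ k := by
      rw [hs, div_pow]
      field_simp
    calc A1 * (B1 ^ k * N k / 2 ^ k) = t ^ k * (A1 * (s ^ k * N k / 2 ^ k)) := by
          rw [← hpow]; ring
      _ ≤ t ^ k * Φ t := mul_le_mul_of_nonneg_left hΦlb (pow_nonneg ht0.le k)
  -- integral bounds
  have hnonneg : 0 ≤ᵐ[volume.restrict (Set.Ioi (0:ℝ))] fun t => t ^ k * Φ t := by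
    filter_upwards [ae_restrict_mem measurableSet_Ioi] with t ht
    exact mul_nonneg (pow_nonneg (le_of_lt ht) k) (hΦpos t ht).le
  have step1 : (∫ t in Set.Icc a b, t ^ k * Φ t) ≤ ∫ t in Set.Ioi (0:ℝ), t ^ k * Φ t :=
    setIntegral_mono_set hInt hnonneg hsub.eventuallyLE
  have step2 : A1 * (B1 ^ k * N k / 2 ^ k) * (volume (Set.Icc a b)).toReal ≤
      ∫ t in Set.Icc a b, t ^ k * Φ t :=
    by have := setIntegral_ge_of_const_le measurableSet_Icc measure_Icc_lt_top.ne key (hInt.mono_set hsub)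
       rw [measureReal_def, smul_eq_mul] at this
       exact (mul_comm _ _).trans_le this
  have hvol : (volume (Set.Icc a b)).toReal = b - a := by
    rw [Real.volume_Icc, ENNReal.toReal_ofReal (by linarith)]
  rw [hvol] at step2
  have hba : B1 / 2 ≤ b - a := by
    rw [ha, hb]
    have := hr1 k
    nlinarith
  have hQ1 : min (A1 * B1 / 2) (B1 / 2) ^ (k + 1) * N k ≤ A1 * (B1 ^ k * N k / 2 ^ k) * (b - a) := by
    have hQpos : (0:ℝ) < min (A1 * B1 / 2) (B1 / 2) := lt_min (by positivity) (by positivity)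
    have h1 : min (A1 * B1 / 2) (B1 / 2) ^ (k + 1) ≤ (A1 * B1 / 2) * (B1 / 2) ^ k := by
      calc min (A1 * B1 / 2) (B1 / 2) ^ (k + 1)
          = min (A1 * B1 / 2) (B1 / 2) ^ k * min (A1 * B1 / 2) (B1 / 2) := pow_succ _ _
        _ ≤ (B1 / 2) ^ k * (A1 * B1 / 2) := by
            apply mul_le_mul (pow_le_pow_left₀ hQpos.le (min_le_right _ _) k)
              (min_le_left _ _) hQpos.le (pow_nonneg (by positivity) k)
        _ = (A1 * B1 / 2) * (B1 / 2) ^ k := by ring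
    have e1 : min (A1 * B1 / 2) (B1 / 2) ^ (k + 1) * N k ≤ (A1 * B1 / 2) * (B1 / 2) ^ k * N k :=
      mul_le_mul_of_nonneg_right h1 (hpos k).le
    have e2 : (A1 * B1 / 2) * (B1 / 2) ^ k * N k = A1 * (B1 ^ k * N k / 2 ^ k) * (B1 / 2) := by
      rw [div_pow]; ring
    have hcnn : (0:ℝ) ≤ A1 * (B1 ^ k * N k / 2 ^ k) :=
      mul_nonneg hA1.le (div_nonneg (mul_nonneg (pow_nonneg hB1.le k) (hpos k).le)
        (pow_nonneg (by norm_num) k))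
    have e3 : A1 * (B1 ^ k * N k / 2 ^ k) * (B1 / 2) ≤ A1 * (B1 ^ k * N k / 2 ^ k) * (b - a) :=
      mul_le_mul_of_nonneg_left hba hcnn
    linarith
  calc min (A1 * B1 / 2) (B1 / 2) ^ (k + 1) * N k ≤ A1 * (B1 ^ k * N k / 2 ^ k) * (b - a) := hQ1
    _ ≤ ∫ t in Set.Icc a b, t ^ k * Φ t := step2
    _ ≤ _ := step1
end

section
/- Let N be a weight sequence satisfying the derivation-closedness condition sup_{k≥1} (N_k/N_{k-1})^{1/k} < ∞, with associated weight h_N(t) = inf_k t^k N_k, and let Φ : (0,∞) → ℝ satisfy 0 ≤ Φ(t) ≤ A_2 h_N(B_2/t) for constants A_2, B_2 > 0 and all t > 0. Then there exists Q_2 > 0 such that ∫_0^∞ t^k Φ(t) dt ≤ Q_2^{k+1} N_k for all k ∈ ℕ. -/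
open MeasureTheory

theorem moments_upper_bound_of_optimal_flat_kernel (N : ℕ → ℝ)
    (hpos : ∀ k, 0 < N k) (hN0 : N 0 = 1) (hN1 : 1 ≤ N 1)
    (hmono : Monotone fun k => N (k + 1) / N k)
    (hlim : Filter.Tendsto (fun k => N (k + 1) / N k) Filter.atTop Filter.atTop)
    (hdc : ∃ H : ℝ, ∀ k : ℕ, 1 ≤ k → (N k / N (k - 1)) ^ ((1 : ℝ) / (k : ℝ)) ≤ H)
    (Φ : ℝ → ℝ) (hΦmeas : Measurable Φ)
    (A2 B2 : ℝ) (hA2 : 0 < A2) (hB2 : 0 < B2)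
    (hΦnonneg : ∀ t : ℝ, 0 < t → 0 ≤ Φ t)
    (hupper : ∀ t : ℝ, 0 < t → Φ t ≤ A2 * (⨅ k : ℕ, (B2 / t) ^ k * N k)) :
    ∃ Q2 : ℝ, 0 < Q2 ∧ ∀ k : ℕ,
      (∫ t in Set.Ioi (0 : ℝ), t ^ k * Φ t) ≤ Q2 ^ (k + 1) * N k := by
  obtain ⟨H, hH⟩ := hdc
  -- H ≥ 1
  have hH1 : 1 ≤ H := by
    have h1 := hH 1 le_rfl
    simp [hN0] at h1
    exact le_trans hN1 h1
  have hHpos : 0 < H := lt_of_lt_of_le one_pos hH1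
  -- quotient bound
  have hq : ∀ k : ℕ, N (k + 1) ≤ H ^ (k + 1) * N k := by
    intro k
    have h := hH (k + 1) (by omega)
    simp only [Nat.add_sub_cancel] at h
    have hx : 0 < N (k + 1) / N k := div_pos (hpos _) (hpos _)
    have hxk : N (k + 1) / N k ≤ H ^ (k + 1) := by
      have heq : ((N (k + 1) / N k) ^ ((1 : ℝ) / ((k + 1 : ℕ) : ℝ))) ^ (k + 1 : ℕ)
          = N (k + 1) / N k := by
        rw [← Real.rpow_natCast ((N (k + 1) / N k) ^ ((1 : ℝ) / ((k + 1 : ℕ) : ℝ))),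
          ← Real.rpow_mul hx.le]
        rw [show (1 : ℝ) / ((k + 1 : ℕ) : ℝ) * ((k + 1 : ℕ) : ℝ) = 1 by
          field_simp]
        exact Real.rpow_one _
      calc N (k + 1) / N k
          = ((N (k + 1) / N k) ^ ((1 : ℝ) / ((k + 1 : ℕ) : ℝ))) ^ (k + 1 : ℕ) := heq.symm
        _ ≤ H ^ (k + 1 : ℕ) :=
            pow_le_pow_left₀ (Real.rpow_nonneg hx.le _) h _
    rw [div_le_iff₀ (hpos k)] at hxk
    linarith [hxk]
  -- N k ≥ 1
  have hNge1 : ∀ k, 1 ≤ N k := by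
    intro k
    induction k with
    | zero => rw [hN0]
    | succ n ih =>
      have h := hmono (Nat.zero_le n)
      simp only [hN0, div_one] at h
      have h2 : 1 ≤ N (n + 1) / N n := le_trans hN1 h
      rw [le_div_iff₀ (hpos n)] at h2
      linarith
  have hN2step : ∀ k : ℕ, N (k + 2) ≤ H ^ (2 * k + 3) * N k := by
    intro k
    have h1 := hq (k + 1)
    have h2 := hq k
    have hHp : (0 : ℝ) ≤ H ^ (k + 2) := by positivity
    calc N (k + 2) ≤ H ^ (k + 2) * N (k + 1) := h1
      _ ≤ H ^ (k + 2) * (H ^ (k + 1) * N k) := mul_le_mul_of_nonneg_left h2 hHp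
      _ = H ^ (2 * k + 3) * N k := by ring
  -- infimum bound
  have hΦle : ∀ t : ℝ, 0 < t → ∀ j : ℕ, Φ t ≤ A2 * ((B2 / t) ^ j * N j) := by
    intro t ht j
    refine le_trans (hupper t ht) (mul_le_mul_of_nonneg_left ?_ hA2.le)
    apply ciInf_le
    refine ⟨0, ?_⟩
    rintro x ⟨i, rfl⟩
    have hbt : 0 < B2 / t := div_pos hB2 ht
    have hNi := hpos i
    positivity
  set D : ℝ := max (B2 * H ^ 2) 1 with hD
  have hD1 : 1 ≤ D := le_max_right _ _
  set Q2 : ℝ := max (A2 * (1 + B2 ^ 2 * H ^ 3)) D with hQ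
  have hQD : D ≤ Q2 := le_max_right _ _
  have hQA : A2 * (1 + B2 ^ 2 * H ^ 3) ≤ Q2 := le_max_left _ _
  have hQpos : 0 < Q2 := lt_of_lt_of_le (lt_of_lt_of_le one_pos hD1) hQD
  refine ⟨Q2, hQpos, fun k => ?_⟩
  set f : ℝ → ℝ := fun t => t ^ k * Φ t with hf
  set C2 : ℝ := A2 * B2 ^ (k + 2) * N (k + 2) with hC2
  have hC2pos : 0 < C2 := by
    have := hpos (k + 2); positivity
  have hmeasf : Measurable f := (measurable_id.pow_const k).mul hΦmeas
  -- integrability on (0,1]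
  have hf1 : IntegrableOn f (Set.Ioc 0 1) := by
    apply Integrable.mono' (integrable_const A2) hmeasf.aestronglyMeasurable.restrict
    filter_upwards [ae_restrict_mem measurableSet_Ioc] with t ht
    have ht0 : 0 < t := ht.1
    have hΦA : Φ t ≤ A2 := by
      have h := hΦle t ht0 0
      simpa [hN0] using h
    rw [Real.norm_eq_abs, abs_of_nonneg (mul_nonneg (by positivity) (hΦnonneg t ht0))]
    calc t ^ k * Φ t ≤ 1 * A2 :=
        mul_le_mul (pow_le_one₀ ht0.le ht.2) hΦA (hΦnonneg t ht0) zero_le_one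
      _ = A2 := one_mul _
  -- integrability on (1,∞)
  have hint_rpow : IntegrableOn (fun t : ℝ => t ^ (-2 : ℝ)) (Set.Ioi 1) :=
    integrableOn_Ioi_rpow_of_lt (by norm_num) one_pos
  have hbound2 : ∀ t : ℝ, t ∈ Set.Ioi (1 : ℝ) → f t ≤ C2 * t ^ (-2 : ℝ) := by
    intro t ht
    have ht1 : (1 : ℝ) < t := ht
    have ht0 : (0 : ℝ) < t := lt_trans one_pos ht1
    have ht0' : t ≠ 0 := ht0.ne'
    calc f t = t ^ k * Φ t := rfl
      _ ≤ t ^ k * (A2 * ((B2 / t) ^ (k + 2) * N (k + 2))) :=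
          mul_le_mul_of_nonneg_left (hΦle t ht0 (k + 2)) (by positivity)
      _ = C2 * t ^ (-2 : ℝ) := by
          rw [Real.rpow_neg ht0.le, show ((2 : ℝ)) = ((2 : ℕ) : ℝ) by norm_num,
            Real.rpow_natCast, hC2, div_pow]
          field_simp
          ring
  have hf2 : IntegrableOn f (Set.Ioi 1) := by
    apply Integrable.mono' (hint_rpow.const_mul C2) hmeasf.aestronglyMeasurable.restrict
    filter_upwards [ae_restrict_mem measurableSet_Ioi] with t ht
    have ht0 : (0 : ℝ) < t := lt_trans one_pos ht
    rw [Real.norm_eq_abs, abs_of_nonneg (mul_nonneg (by positivity) (hΦnonneg t ht0))]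
    exact hbound2 t ht
  -- split the integral
  have hsplit : (∫ t in Set.Ioi (0 : ℝ), f t)
      = (∫ t in Set.Ioc (0 : ℝ) 1, f t) + ∫ t in Set.Ioi (1 : ℝ), f t := by
    rw [← Set.Ioc_union_Ioi_eq_Ioi (zero_le_one : (0 : ℝ) ≤ 1),
      setIntegral_union (Set.Ioc_disjoint_Ioi le_rfl) measurableSet_Ioi hf1 hf2]
  have hb1 : (∫ t in Set.Ioc (0 : ℝ) 1, f t) ≤ A2 := by
    calc (∫ t in Set.Ioc (0 : ℝ) 1, f t) ≤ ∫ _ in Set.Ioc (0 : ℝ) 1, A2 := by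
          apply setIntegral_mono_on hf1 (integrableOn_const (by simp))
            measurableSet_Ioc
          intro t ht
          have ht0 : 0 < t := ht.1
          have hΦA : Φ t ≤ A2 := by
            have h := hΦle t ht0 0
            simpa [hN0] using h
          calc t ^ k * Φ t ≤ 1 * A2 :=
              mul_le_mul (pow_le_one₀ ht0.le ht.2) hΦA (hΦnonneg t ht0) zero_le_one
            _ = A2 := one_mul _
      _ = A2 := by simp
  have hb2 : (∫ t in Set.Ioi (1 : ℝ), f t) ≤ C2 := by
    calc (∫ t in Set.Ioi (1 : ℝ), f t) ≤ ∫ t in Set.Ioi (1 : ℝ), C2 * t ^ (-2 : ℝ) :=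
          setIntegral_mono_on hf2 (hint_rpow.const_mul C2) measurableSet_Ioi hbound2
      _ = C2 * ∫ t in Set.Ioi (1 : ℝ), t ^ (-2 : ℝ) := integral_const_mul _ _
      _ = C2 := by
          rw [integral_Ioi_rpow_of_lt (by norm_num) one_pos]
          norm_num
  -- final arithmetic
  have hfinal : A2 + C2 ≤ Q2 ^ (k + 1) * N k := by
    have hNk : 1 ≤ N k := hNge1 k
    have hNkpos : 0 < N k := hpos k
    have hC2b : C2 ≤ A2 * B2 ^ 2 * H ^ 3 * (B2 * H ^ 2) ^ k * N k := by
      have hs := hN2step k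
      calc C2 = A2 * B2 ^ (k + 2) * N (k + 2) := rfl
        _ ≤ A2 * B2 ^ (k + 2) * (H ^ (2 * k + 3) * N k) :=
            mul_le_mul_of_nonneg_left hs (by positivity)
        _ = A2 * B2 ^ 2 * H ^ 3 * (B2 * H ^ 2) ^ k * N k := by
            rw [mul_pow, pow_add, show 2 * k + 3 = k * 2 + 3 by ring, pow_add, pow_mul]
            ring
    have hDk : (B2 * H ^ 2) ^ k ≤ D ^ k :=
      pow_le_pow_left₀ (by positivity) (le_max_left _ _) k
    have hDk1 : (1 : ℝ) ≤ D ^ k := by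
      calc (1 : ℝ) = 1 ^ k := (one_pow k).symm
        _ ≤ D ^ k := pow_le_pow_left₀ zero_le_one hD1 k
    have hDN : (1 : ℝ) ≤ D ^ k * N k :=
      le_trans hDk1 (le_mul_of_one_le_right (by positivity) hNk)
    have h1 : A2 ≤ A2 * D ^ k * N k := by
      calc A2 = A2 * 1 := (mul_one _).symm
        _ ≤ A2 * (D ^ k * N k) := mul_le_mul_of_nonneg_left hDN hA2.le
        _ = A2 * D ^ k * N k := by ring
    have h2 : C2 ≤ A2 * B2 ^ 2 * H ^ 3 * D ^ k * N k := by
      refine le_trans hC2b ?_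
      exact mul_le_mul_of_nonneg_right
        (mul_le_mul_of_nonneg_left hDk (by positivity)) hNkpos.le
    have hQk : D ^ k ≤ Q2 ^ k := pow_le_pow_left₀ (by positivity) hQD k
    calc A2 + C2 ≤ A2 * D ^ k * N k + A2 * B2 ^ 2 * H ^ 3 * D ^ k * N k :=
        add_le_add h1 h2
      _ = (A2 * (1 + B2 ^ 2 * H ^ 3)) * (D ^ k * N k) := by ring
      _ ≤ Q2 * (Q2 ^ k * N k) := by
          refine mul_le_mul hQA ?_ (by positivity) hQpos.le
          exact mul_le_mul_of_nonneg_right hQk hNkpos.le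
      _ = Q2 ^ (k + 1) * N k := by ring
  calc (∫ t in Set.Ioi (0 : ℝ), t ^ k * Φ t)
      = (∫ t in Set.Ioc (0 : ℝ) 1, f t) + ∫ t in Set.Ioi (1 : ℝ), f t := hsplit
    _ ≤ A2 + C2 := add_le_add hb1 hb2
    _ ≤ Q2 ^ (k + 1) * N k := hfinal
end
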